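/- The function I(Q) = \log Q + \sum_{d\ge 1} Q^d (3d)!/(d(d!)^3) satisfies the Picard-Fuchs equation (\theta^3 - 3Q\,\theta(3\theta+1)(3\theta+2)) I = 0, where \theta = Q\, d/dQ, for 0 < |Q| < 1/27 (on a branch of the logarithm). -/

import Mathlib

open Complex

noncomputable def pfc (d : ℕ) : ℂ :=
  ((3 * (d + 1)).factorial : ℂ) / ((d + 1) * ((d + 1).factorial : ℂ) ^ 3)

lemma fact_three_le (n : ℕ) : (3 * n).factorial ≤ 27 ^ n * n.factorial ^ 3 := by
  induction n with
  | zero => simp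
  | succ n ih =>
    have h1 : 3 * (n + 1) = 3 * n + 1 + 1 + 1 := by ring
    have h2 : (3 * (n + 1)).factorial
        = (3 * n + 3) * ((3 * n + 2) * ((3 * n + 1) * (3 * n).factorial)) := by
      rw [h1, Nat.factorial_succ, Nat.factorial_succ, Nat.factorial_succ]
    have h3 : (3 * n + 3) * ((3 * n + 2) * ((3 * n + 1) * (3 * n).factorial))
        ≤ (3 * n + 3) * ((3 * n + 2) * ((3 * n + 1) * (27 ^ n * n.factorial ^ 3))) := by
      gcongr
    have h4 : (3 * n + 3) * ((3 * n + 2) * ((3 * n + 1) * (27 ^ n * n.factorial ^ 3)))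
        ≤ 27 ^ (n + 1) * (n + 1).factorial ^ 3 := by
      have h5 : (n + 1).factorial ^ 3 = (n + 1) ^ 3 * n.factorial ^ 3 := by
        rw [Nat.factorial_succ]; ring
      rw [h5]
      have h6 : (3 * n + 3) * ((3 * n + 2) * (3 * n + 1)) ≤ 27 * (n + 1) ^ 3 := by nlinarith
      calc (3 * n + 3) * ((3 * n + 2) * ((3 * n + 1) * (27 ^ n * n.factorial ^ 3)))
          = ((3 * n + 3) * ((3 * n + 2) * (3 * n + 1))) * (27 ^ n * n.factorial ^ 3) := by ring
        _ ≤ (27 * (n + 1) ^ 3) * (27 ^ n * n.factorial ^ 3) := by gcongr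
        _ = 27 ^ (n + 1) * ((n + 1) ^ 3 * n.factorial ^ 3) := by ring
    rw [h2]
    exact le_trans h3 h4

lemma norm_pfc (d : ℕ) : ‖pfc d‖ ≤ 27 ^ (d + 1) := by
  have h1 : pfc d = (((3 * (d + 1)).factorial : ℂ)) / ((((d + 1) * (d + 1).factorial ^ 3 : ℕ)) : ℂ) := by
    rw [pfc]
    push_cast
    ring_nf
  rw [h1, norm_div, Complex.norm_natCast, Complex.norm_natCast]
  rw [div_le_iff₀ (by positivity)]
  have h2 : (3 * (d + 1)).factorial ≤ 27 ^ (d + 1) * ((d + 1) * (d + 1).factorial ^ 3) := by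
    calc (3 * (d + 1)).factorial ≤ 27 ^ (d + 1) * (d + 1).factorial ^ 3 := fact_three_le (d + 1)
      _ ≤ 27 ^ (d + 1) * ((d + 1) * (d + 1).factorial ^ 3) :=
          Nat.mul_le_mul_left _ (Nat.le_mul_of_pos_left _ (Nat.succ_pos d))
  exact_mod_cast h2

lemma aux_summable (k : ℕ) {r : ℝ} (h0 : 0 ≤ r) (hr : r < 1) :
    Summable (fun d : ℕ => ((d : ℝ) + 1) ^ k * r ^ (d + 1)) := by
  have h := summable_pow_mul_geometric_of_norm_lt_one (R := ℝ) k
    (r := r) (by rwa [Real.norm_eq_abs, _root_.abs_of_nonneg h0])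
  have h2 := (summable_nat_add_iff (f := fun n : ℕ => (n : ℝ) ^ k * r ^ n) 1).2 h
  exact h2.congr (fun d => by push_cast; ring)

/-- Derivative of a power series termwise, in our specific setting. -/
lemma key_hasDerivAt {a : ℕ → ℂ} {k : ℕ}
    (ha : ∀ d, ‖a d‖ ≤ ((d : ℝ) + 1) ^ k * 27 ^ (d + 1)) {z : ℂ} (hz : ‖z‖ < 1 / 27) :
    HasDerivAt (fun Q : ℂ => ∑' d : ℕ, a d * Q ^ (d + 1))
      (∑' d : ℕ, ((d : ℂ) + 1) * a d * z ^ d) z := by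
  set r : ℝ := (‖z‖ + 1 / 27) / 2 with hrdef
  have hz0 : (0 : ℝ) ≤ ‖z‖ := norm_nonneg z
  have hr0 : 0 < r := by rw [hrdef]; linarith
  have hzr : ‖z‖ < r := by rw [hrdef]; linarith
  have hr27 : 27 * r < 1 := by rw [hrdef]; linarith
  have h27r0 : (0 : ℝ) ≤ 27 * r := by linarith
  -- summable bound
  have hu : Summable (fun d : ℕ => ((d : ℝ) + 1) ^ (k + 1) * 27 ^ (d + 1) * r ^ d) := by
    have h := (aux_summable (k + 1) h27r0 hr27).mul_left (1 / r)
    apply h.congr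
    intro d
    have : (27 * r) ^ (d + 1) = 27 ^ (d + 1) * (r ^ d * r) := by
      rw [mul_pow]; ring
    field_simp [this]
    ring
  apply hasDerivAt_tsum_of_isPreconnected
    (u := fun d : ℕ => ((d : ℝ) + 1) ^ (k + 1) * 27 ^ (d + 1) * r ^ d)
    (g' := fun (d : ℕ) (y : ℂ) => ((d : ℂ) + 1) * a d * y ^ d)
    (t := Metric.ball (0 : ℂ) r) (y₀ := (0 : ℂ))
    hu Metric.isOpen_ball (convex_ball (0 : ℂ) r).isPreconnected
    ?_ ?_ (Metric.mem_ball_self hr0) ?_ (by simpa using hzr)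
  · intro n y _
    have h := (hasDerivAt_pow (n + 1) y).const_mul (a n)
    convert h using 1
    · rfl
    push_cast
    ring_nf
  · intro n y hy
    have hyr : ‖y‖ < r := by simpa using hy
    have h1 : ‖((n : ℂ) + 1) * a n * y ^ n‖ = ((n : ℝ) + 1) * ‖a n‖ * ‖y‖ ^ n := by
      rw [norm_mul, norm_mul, norm_pow]
      congr 2
      have : ((n : ℂ) + 1) = ((n + 1 : ℕ) : ℂ) := by push_cast; ring
      rw [this, Complex.norm_natCast]
      push_cast; ring
    rw [h1]
    have h2 : ‖y‖ ^ n ≤ r ^ n := by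
      apply pow_le_pow_left₀ (norm_nonneg y) hyr.le
    calc ((n : ℝ) + 1) * ‖a n‖ * ‖y‖ ^ n
        ≤ ((n : ℝ) + 1) * (((n : ℝ) + 1) ^ k * 27 ^ (n + 1)) * r ^ n := by
          have h3 := ha n
          have h4 : (0:ℝ) ≤ (n : ℝ) + 1 := by positivity
          gcongr
      _ = ((n : ℝ) + 1) ^ (k + 1) * 27 ^ (n + 1) * r ^ n := by ring
  · have h0 : (fun d : ℕ => a d * (0 : ℂ) ^ (d + 1)) = fun _ => 0 := by
      funext d; simp
    rw [h0]
    exact summable_zero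

lemma key_summable {a : ℕ → ℂ} {k : ℕ}
    (ha : ∀ d, ‖a d‖ ≤ ((d : ℝ) + 1) ^ k * 27 ^ (d + 1)) {z : ℂ} (hz : ‖z‖ < 1 / 27) :
    Summable (fun d : ℕ => a d * z ^ (d + 1)) := by
  have h27 : 27 * ‖z‖ < 1 := by linarith
  have h0 : (0 : ℝ) ≤ 27 * ‖z‖ := by positivity
  have hnorm : Summable (fun d : ℕ => ‖a d * z ^ (d + 1)‖) := by
    refine Summable.of_nonneg_of_le (fun d => norm_nonneg _) (fun d => ?_)
      (aux_summable k h0 h27)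
    · rw [norm_mul, norm_pow]
      calc ‖a d‖ * ‖z‖ ^ (d + 1)
          ≤ (((d : ℝ) + 1) ^ k * 27 ^ (d + 1)) * ‖z‖ ^ (d + 1) := by
            gcongr; exact ha d
        _ = ((d : ℝ) + 1) ^ k * (27 * ‖z‖) ^ (d + 1) := by rw [mul_pow]; ring
  exact Summable.of_norm hnorm

lemma deriv_zero_of_eventually_zero_real {f : ℂ → ℂ} {x : ℝ}
    (h : ∀ᶠ y : ℝ in nhds x, f ↑y = 0) : deriv f ↑x = 0 := by
  by_cases hd : DifferentiableAt ℂ f ↑x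
  · have h1 : HasDerivAt (fun y : ℝ => f ↑y) (deriv f ↑x) x := hd.hasDerivAt.comp_ofReal
    have h2 : HasDerivAt (fun y : ℝ => f ↑y) 0 x := by
      apply (hasDerivAt_const x (0 : ℂ)).congr_of_eventuallyEq
      exact h.mono fun y hy => hy
    exact h1.unique h2
  · exact deriv_zero_of_not_differentiableAt hd

lemma not_continuousAt_clog {x : ℝ} (hx : x < 0) : ¬ ContinuousAt Complex.log ↑x := by
  intro hc
  have hne : ((nhdsWithin (↑x : ℂ) {z : ℂ | z.im < 0})).NeBot := by
    rw [← mem_closure_iff_nhdsWithin_neBot]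
    have ht : Filter.Tendsto (fun n : ℕ => (↑x : ℂ) - Complex.I * (↑(1 / ((n : ℝ) + 1)) : ℂ))
        Filter.atTop (nhds ↑x) := by
      have hr : Filter.Tendsto (fun n : ℕ => 1 / ((n : ℝ) + 1)) Filter.atTop (nhds 0) :=
        tendsto_one_div_add_atTop_nhds_zero_nat
      have hc2 : Filter.Tendsto (fun n : ℕ => ((1 / ((n : ℝ) + 1) : ℝ) : ℂ))
          Filter.atTop (nhds 0) := by
        have := (Complex.continuous_ofReal.tendsto 0).comp hr
        simpa [Function.comp_def, one_div] using this
      have := (tendsto_const_nhds (x := (↑x : ℂ)) (f := Filter.atTop (α := ℕ))).sub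
        (hc2.const_mul Complex.I)
      simpa using this
    apply mem_closure_of_tendsto ht
    apply Filter.Eventually.of_forall
    intro n
    simp only [Set.mem_setOf_eq, Complex.sub_im, Complex.ofReal_im, Complex.mul_im,
      Complex.I_re, Complex.I_im, Complex.ofReal_re, zero_mul, one_mul, zero_add, zero_sub,
      neg_lt, neg_zero]
    positivity
  have h1 := Complex.tendsto_log_nhdsWithin_im_neg_of_re_neg_of_im_zero
    (z := (↑x : ℂ)) (by simpa using hx) (by simp)
  have h2 : Filter.Tendsto Complex.log (nhdsWithin (↑x : ℂ) {z : ℂ | z.im < 0})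
      (nhds (Complex.log ↑x)) := hc.continuousWithinAt.tendsto
  have heq := tendsto_nhds_unique h1 h2
  have hlog : Complex.log ↑x = ↑(Real.log ‖(↑x : ℂ)‖) + ↑Real.pi * Complex.I := by
    rw [Complex.log, Complex.arg_ofReal_of_neg hx]
  rw [hlog] at heq
  have him := congrArg Complex.im heq
  simp at him
  linarith [Real.pi_pos, him]

/-- `I(Q) = log Q + ∑_{d≥1} Q^d (3d)!/(d(d!)^3)` satisfies the Picard–Fuchs equation
`(θ³ - 3Q·θ(3θ+1)(3θ+2)) I = 0` with `θ = Q d/dQ`, on `0 < |Q| < 1/27`.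
Here `θ(3θ+1)(3θ+2) = 9θ³ + 9θ² + 2θ`. -/
theorem stmt_1 :
    let I : ℂ → ℂ := fun Q => Complex.log Q +
      ∑' d : ℕ, (((3 * (d + 1)).factorial : ℂ) / ((d + 1) * ((d + 1).factorial : ℂ) ^ 3)) * Q ^ (d + 1)
    let θ : (ℂ → ℂ) → (ℂ → ℂ) := fun f Q => Q * deriv f Q
    ∀ Q : ℂ, 0 < ‖Q‖ → ‖Q‖ < 1 / 27 →
      θ (θ (θ I)) Q - 3 * Q * (9 * θ (θ (θ I)) Q + 9 * θ (θ I) Q + 2 * θ I Q) = 0 := by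
  intro I θ Q hQ0 hQ27
  -- coefficient sequences
  set a1 : ℕ → ℂ := fun d => ((d : ℂ) + 1) * pfc d with ha1def
  set a2 : ℕ → ℂ := fun d => ((d : ℂ) + 1) ^ 2 * pfc d with ha2def
  set a3 : ℕ → ℂ := fun d => ((d : ℂ) + 1) ^ 3 * pfc d with ha3def
  have hnorm_nat : ∀ d : ℕ, ‖((d : ℂ) + 1)‖ = (d : ℝ) + 1 := by
    intro d
    have : ((d : ℂ) + 1) = ((d + 1 : ℕ) : ℂ) := by push_cast; ring
    rw [this, Complex.norm_natCast]; push_cast; ring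
  have hb0 : ∀ d, ‖pfc d‖ ≤ ((d : ℝ) + 1) ^ 0 * 27 ^ (d + 1) := by
    intro d; simpa using norm_pfc d
  have hb1 : ∀ d, ‖a1 d‖ ≤ ((d : ℝ) + 1) ^ 1 * 27 ^ (d + 1) := by
    intro d
    rw [ha1def]
    simp only []
    rw [norm_mul, hnorm_nat d]
    have := norm_pfc d
    have h1 : (0:ℝ) ≤ (d : ℝ) + 1 := by positivity
    calc ((d : ℝ) + 1) * ‖pfc d‖ ≤ ((d : ℝ) + 1) * 27 ^ (d + 1) := by gcongr
      _ = ((d : ℝ) + 1) ^ 1 * 27 ^ (d + 1) := by ring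
  have hb2 : ∀ d, ‖a2 d‖ ≤ ((d : ℝ) + 1) ^ 2 * 27 ^ (d + 1) := by
    intro d
    rw [ha2def]
    simp only []
    rw [norm_mul, norm_pow, hnorm_nat d]
    have := norm_pfc d
    gcongr
  have hb3 : ∀ d, ‖a3 d‖ ≤ ((d : ℝ) + 1) ^ 3 * 27 ^ (d + 1) := by
    intro d
    rw [ha3def]
    simp only []
    rw [norm_mul, norm_pow, hnorm_nat d]
    have := norm_pfc d
    gcongr
  -- the series part of I
  set F : ℂ → ℂ := fun Q => ∑' d : ℕ, pfc d * Q ^ (d + 1) with hFdef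
  have hI : I = fun Q => Complex.log Q + F Q := rfl
  set G1 : ℂ → ℂ := fun Q => ∑' d : ℕ, a1 d * Q ^ (d + 1) with hG1def
  set G2 : ℂ → ℂ := fun Q => ∑' d : ℕ, a2 d * Q ^ (d + 1) with hG2def
  set G3 : ℂ → ℂ := fun Q => ∑' d : ℕ, a3 d * Q ^ (d + 1) with hG3def
  -- theta of a power series: z * (termwise derivative) shifts the coefficient
  have hshift : ∀ (a b : ℕ → ℂ) (z : ℂ), (∀ d, b d = ((d : ℂ) + 1) * a d) →
      z * ∑' d : ℕ, ((d : ℂ) + 1) * a d * z ^ d = ∑' d : ℕ, b d * z ^ (d + 1) := by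
    intro a b z hb
    rw [← tsum_mul_left]
    apply tsum_congr
    intro d
    rw [hb d]
    ring
  -- slit plane points: the main computation
  have main : ∀ z : ℂ, z ∈ Complex.slitPlane → ‖z‖ < 1 / 27 →
      (θ I z = 1 + G1 z ∧ θ (θ I) z = G2 z ∧ θ (θ (θ I)) z = G3 z) := by
    intro z hz hz27
    have hzne : z ≠ 0 := Complex.slitPlane_ne_zero hz
    set U : Set ℂ := Complex.slitPlane ∩ Metric.ball (0 : ℂ) (1 / 27) with hUdef
    have hUopen : IsOpen U := Complex.isOpen_slitPlane.inter Metric.isOpen_ball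
    have hzU : z ∈ U := ⟨hz, by simpa using hz27⟩
    -- step 1 : θ I = 1 + G1 on U
    have step1 : ∀ w ∈ U, θ I w = 1 + G1 w := by
      intro w hw
      have hw27 : ‖w‖ < 1 / 27 := by simpa using hw.2
      have hwne : w ≠ 0 := Complex.slitPlane_ne_zero hw.1
      have hF : HasDerivAt F (∑' d : ℕ, ((d : ℂ) + 1) * pfc d * w ^ d) w :=
        key_hasDerivAt hb0 hw27
      have hlog : HasDerivAt Complex.log w⁻¹ w := Complex.hasDerivAt_log hw.1
      have hId : HasDerivAt I (w⁻¹ + ∑' d : ℕ, ((d : ℂ) + 1) * pfc d * w ^ d) w := by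
        rw [hI]; exact hlog.add hF
      show w * deriv I w = 1 + G1 w
      rw [hId.deriv, mul_add, mul_inv_cancel₀ hwne,
        hshift pfc a1 w (fun d => rfl)]
    -- step 2 : θ (θ I) = G2 on U
    have step2 : ∀ w ∈ U, θ (θ I) w = G2 w := by
      intro w hw
      have hw27 : ‖w‖ < 1 / 27 := by simpa using hw.2
      have hG1d : HasDerivAt G1 (∑' d : ℕ, ((d : ℂ) + 1) * a1 d * w ^ d) w :=
        key_hasDerivAt hb1 hw27
      have heq : θ I =ᶠ[nhds w] fun Q => 1 + G1 Q := by
        filter_upwards [hUopen.mem_nhds hw] with y hy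
        exact step1 y hy
      have hder : deriv (θ I) w = ∑' d : ℕ, ((d : ℂ) + 1) * a1 d * w ^ d := by
        rw [heq.deriv_eq]
        have : HasDerivAt (fun Q => 1 + G1 Q) (∑' d : ℕ, ((d : ℂ) + 1) * a1 d * w ^ d) w :=
          hG1d.const_add 1
        exact this.deriv
      show w * deriv (θ I) w = G2 w
      rw [hder, hshift a1 a2 w (fun d => by rw [ha1def, ha2def]; ring)]
    -- step 3 : θ (θ (θ I)) = G3 on U
    have step3 : ∀ w ∈ U, θ (θ (θ I)) w = G3 w := by
      intro w hw
      have hw27 : ‖w‖ < 1 / 27 := by simpa using hw.2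
      have hG2d : HasDerivAt G2 (∑' d : ℕ, ((d : ℂ) + 1) * a2 d * w ^ d) w :=
        key_hasDerivAt hb2 hw27
      have heq : θ (θ I) =ᶠ[nhds w] G2 := by
        filter_upwards [hUopen.mem_nhds hw] with y hy
        exact step2 y hy
      have hder : deriv (θ (θ I)) w = ∑' d : ℕ, ((d : ℂ) + 1) * a2 d * w ^ d := by
        rw [heq.deriv_eq]
        exact hG2d.deriv
      show w * deriv (θ (θ I)) w = G3 w
      rw [hder, hshift a2 a3 w (fun d => by rw [ha2def, ha3def]; ring)]
    exact ⟨step1 z hzU, step2 z hzU, step3 z hzU⟩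
  -- the power series identity
  have identity : ∀ z : ℂ, ‖z‖ < 1 / 27 →
      G3 z = 6 * z + 27 * z * G3 z + 27 * z * G2 z + 6 * z * G1 z := by
    intro z hz27
    have hS1 : Summable (fun d : ℕ => a1 d * z ^ (d + 1)) := key_summable hb1 hz27
    have hS2 : Summable (fun d : ℕ => a2 d * z ^ (d + 1)) := key_summable hb2 hz27
    have hS3 : Summable (fun d : ℕ => a3 d * z ^ (d + 1)) := key_summable hb3 hz27
    -- coefficient recursion
    have hcoef : ∀ d : ℕ, a3 (d + 1) = 27 * a3 d + 27 * a2 d + 6 * a1 d := by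
      intro d
      have hlhs : a3 (d + 1) = (((d : ℂ) + 2) ^ 3) * pfc (d + 1) := by
        rw [ha3def]; push_cast; ring
      have hrhs : 27 * a3 d + 27 * a2 d + 6 * a1 d
          = (27 * ((d : ℂ) + 1) ^ 3 + 27 * ((d : ℂ) + 1) ^ 2 + 6 * ((d : ℂ) + 1)) * pfc d := by
        rw [ha1def, ha2def, ha3def]; ring
      rw [hlhs, hrhs, pfc, pfc]
      have e1 : (3 * (d + 1 + 1)) = (3 * (d + 1) + 1 + 1) + 1 := by ring
      have e2 : (3 * (d + 1 + 1)).factorial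
          = ((3 * (d + 1) + 3) * ((3 * (d + 1) + 2) * ((3 * (d + 1) + 1))) : ℕ)
            * (3 * (d + 1)).factorial := by
        rw [e1, Nat.factorial_succ, Nat.factorial_succ, Nat.factorial_succ]
        ring
      have e3 : (d + 1 + 1).factorial = (d + 2) * (d + 1).factorial := by
        rw [show d + 1 + 1 = (d + 1) + 1 from rfl, Nat.factorial_succ]
      have hfne : ((d + 1).factorial : ℂ) ≠ 0 :=
        Nat.cast_ne_zero.2 (Nat.factorial_ne_zero _)
      have hd1ne : ((d : ℂ) + 1) ≠ 0 := by
        exact_mod_cast Nat.cast_add_one_ne_zero (R := ℂ) d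
      have hd2ne : ((d : ℂ) + 1 + 1) ≠ 0 := by
        have : ((d : ℂ) + 1 + 1) = ((d + 2 : ℕ) : ℂ) := by push_cast; ring
        rw [this]
        exact Nat.cast_ne_zero.2 (by omega)
      have hfne2 : (((d + 1 + 1).factorial : ℂ)) ≠ 0 :=
        Nat.cast_ne_zero.2 (Nat.factorial_ne_zero _)
      have hD2 : ((((d + 1 : ℕ)) : ℂ) + 1) * ((d + 1 + 1).factorial : ℂ) ^ 3 ≠ 0 :=
        mul_ne_zero (Nat.cast_add_one_ne_zero (d + 1)) (pow_ne_zero _ hfne2)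
      have hD1 : (((d : ℕ) : ℂ) + 1) * ((d + 1).factorial : ℂ) ^ 3 ≠ 0 :=
        mul_ne_zero (Nat.cast_add_one_ne_zero d) (pow_ne_zero _ hfne)
      rw [mul_div_assoc', mul_div_assoc', div_eq_div_iff hD2 hD1, e2, e3]
      push_cast
      ring
    -- split off the first term of G3
    have hsplit : G3 z = a3 0 * z ^ 1 + ∑' d : ℕ, a3 (d + 1) * z ^ (d + 2) :=
      Summable.tsum_eq_zero_add hS3
    have ha30 : a3 0 = 6 := by
      norm_num [ha3def, pfc, Nat.factorial]
    -- rewrite shifted sums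
    have hshift2 : ∀ (a : ℕ → ℂ), Summable (fun d : ℕ => a d * z ^ (d + 1)) →
        (∑' d : ℕ, a d * z ^ (d + 2)) = z * ∑' d : ℕ, a d * z ^ (d + 1) := by
      intro a hS
      rw [← tsum_mul_left]
      apply tsum_congr
      intro d
      ring
    have hS3' : Summable (fun d : ℕ => a3 d * z ^ (d + 2)) :=
      (hS3.mul_left z).congr (fun d => by ring)
    have hS2' : Summable (fun d : ℕ => a2 d * z ^ (d + 2)) :=
      (hS2.mul_left z).congr (fun d => by ring)
    have hS1' : Summable (fun d : ℕ => a1 d * z ^ (d + 2)) :=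
      (hS1.mul_left z).congr (fun d => by ring)
    have hmain : (∑' d : ℕ, a3 (d + 1) * z ^ (d + 2))
        = 27 * (z * G3 z) + 27 * (z * G2 z) + 6 * (z * G1 z) := by
      have e4 : (∑' d : ℕ, a3 (d + 1) * z ^ (d + 2))
          = ∑' d : ℕ, (27 * (a3 d * z ^ (d + 2)) + 27 * (a2 d * z ^ (d + 2))
              + 6 * (a1 d * z ^ (d + 2))) := by
        apply tsum_congr
        intro d
        rw [hcoef d]
        ring
      rw [e4]
      rw [Summable.tsum_add ((hS3'.mul_left 27).add (hS2'.mul_left 27)) (hS1'.mul_left 6),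
        Summable.tsum_add (hS3'.mul_left 27) (hS2'.mul_left 27),
        tsum_mul_left, tsum_mul_left, tsum_mul_left,
        hshift2 a3 hS3, hshift2 a2 hS2, hshift2 a1 hS1]
    linear_combination hsplit + hmain + z * ha30
  -- now split into the two cases
  by_cases hslit : Q ∈ Complex.slitPlane
  · obtain ⟨h1, h2, h3⟩ := main Q hslit hQ27
    have hid := identity Q hQ27
    rw [h1, h2, h3]
    linear_combination hid
  · -- Q is a negative real
    have hQne : Q ≠ 0 := by
      intro h; rw [h] at hQ0; simp at hQ0
    have hQim : Q.im = 0 ∧ Q.re ≤ 0 := by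
      rw [Complex.mem_slitPlane_iff] at hslit
      push_neg at hslit
      exact ⟨hslit.2, hslit.1⟩
    have hQre : Q.re < 0 := by
      rcases eq_or_lt_of_le hQim.2 with h | h
      · exact absurd (Complex.ext (by simp [← h]) (by simp [hQim.1])) hQne
      · exact h
    set x : ℝ := Q.re with hxdef
    have hQx : Q = (x : ℂ) := Complex.ext rfl (by simp [hQim.1])
    -- the open set of bad real parameters
    set V : Set ℝ := {y : ℝ | y < 0 ∧ |y| < 1 / 27} with hVdef
    have hVopen : IsOpen V := by
      have : V = Set.Iio (0 : ℝ) ∩ (abs ⁻¹' Set.Iio (1 / 27 : ℝ)) := by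
        ext y; simp [hVdef, Set.mem_setOf_eq]
      rw [this]
      exact isOpen_Iio.inter ((isOpen_Iio).preimage _root_.continuous_abs)
    have hxV : x ∈ V := by
      constructor
      · exact hQre
      · have : ‖Q‖ = |x| := by rw [hQx, Complex.norm_real, Real.norm_eq_abs]
        rw [← this]; exact hQ27
    -- Step A : deriv I vanishes at every bad real point
    have stepA : ∀ y ∈ V, deriv I ↑y = 0 := by
      intro y hy
      apply deriv_zero_of_not_differentiableAt
      intro hdiff
      have hy27 : ‖(↑y : ℂ)‖ < 1 / 27 := by
        rw [Complex.norm_real, Real.norm_eq_abs]; exact hy.2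
      have hF : DifferentiableAt ℂ F ↑y := (key_hasDerivAt hb0 hy27).differentiableAt
      have hlogd : DifferentiableAt ℂ Complex.log ↑y := by
        have : Complex.log = fun w => I w - F w := by
          funext w; rw [hI]; ring
        rw [this]
        exact hdiff.sub hF
      exact not_continuousAt_clog hy.1 hlogd.continuousAt
    -- hence θ I vanishes on V
    have stepA' : ∀ y ∈ V, θ I ↑y = 0 := by
      intro y hy
      show (↑y : ℂ) * deriv I ↑y = 0
      rw [stepA y hy, mul_zero]
    -- Step B : deriv (θ I) vanishes at every bad real point
    have stepB : ∀ y ∈ V, deriv (θ I) ↑y = 0 := by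
      intro y hy
      apply deriv_zero_of_eventually_zero_real
      filter_upwards [hVopen.mem_nhds hy] with t ht
      exact stepA' t ht
    have stepB' : ∀ y ∈ V, θ (θ I) ↑y = 0 := by
      intro y hy
      show (↑y : ℂ) * deriv (θ I) ↑y = 0
      rw [stepB y hy, mul_zero]
    -- Step C : deriv (θ (θ I)) vanishes at x
    have stepC : deriv (θ (θ I)) ↑x = 0 := by
      apply deriv_zero_of_eventually_zero_real
      filter_upwards [hVopen.mem_nhds hxV] with t ht
      exact stepB' t ht
    have h3 : θ (θ (θ I)) Q = 0 := by
      show Q * deriv (θ (θ I)) Q = 0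
      rw [hQx, stepC, mul_zero]
    have h2 : θ (θ I) Q = 0 := by rw [hQx]; exact stepB' x hxV
    have h1 : θ I Q = 0 := by rw [hQx]; exact stepA' x hxV
    rw [h1, h2, h3]
    ring
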